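/- Define recursively point sets X_d ⊆ ℤ² with distinguished subsets Y_d: X₁ = Y₁ = {(0,0),(1,1)}; X_d is formed by placing side by side (with disjoint x-ranges, left to right) a copy of X_{d-1} scaled vertically by 3, a copy of Y_{d-1} scaled vertically by 3 and shifted up by 2 (omitting its topmost point), and a copy of X_{d-1} scaled vertically by 3 and shifted up by 1; Y_d is the union of the copies of Y_{d-1} inside the first and third pieces. Then in the rectangle of influence graph of X_d (two points adjacent iff the open axis-aligned bounding rectangle they span contains no other point of X_d), the subset Y_d induces the d-dimensional hypercube graph. -/

import Mathlib

/-- The rectangle of influence graph of a point set `P ⊆ ℤ²`: two distinct points of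
`P` are adjacent iff the axis-aligned closed rectangle they span contains no other
point of `P`. -/
def rig (P : Set (ℤ × ℤ)) : SimpleGraph (ℤ × ℤ) where
  Adj p q := p ≠ q ∧ p ∈ P ∧ q ∈ P ∧ ∀ r ∈ P, r ≠ p → r ≠ q →
    ¬ (min p.1 q.1 ≤ r.1 ∧ r.1 ≤ max p.1 q.1 ∧ min p.2 q.2 ≤ r.2 ∧ r.2 ≤ max p.2 q.2)
  symm := by
    constructor
    rintro p q ⟨h1, h2, h3, h4⟩
    refine ⟨h1.symm, h3, h2, ?_⟩
    intro r hr hrq hrp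
    simpa [min_comm, max_comm] using h4 r hr hrp hrq
  loopless := ⟨fun p h => h.1 rfl⟩

/-- The recursive construction: `XYT d = (X_d, Y_d, T_d)` where `X₁ = Y₁ =
{(0,0),(1,1)}`, and `X_{d+1}` is formed by placing side by side (with disjoint
`x`-ranges) a copy of `X_d` scaled vertically by 3, a copy of `Y_d` scaled vertically
by 3 and shifted up by 2 with its topmost point `T_d` omitted, and a copy of `X_d`
scaled vertically by 3 and shifted up by 1; `Y_{d+1}` is the union of the copies of
`Y_d` inside the first and third pieces, and `T_{d+1}` is the topmost point of
`Y_{d+1}`. -/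
def XYT : ℕ → Set (ℤ × ℤ) × Set (ℤ × ℤ) × (ℤ × ℤ)
  | 0 => ({(0, 0)}, {(0, 0)}, (0, 0))
  | 1 => ({(0, 0), (1, 1)}, {(0, 0), (1, 1)}, (1, 1))
  | (d + 2) =>
    let prev := XYT (d + 1)
    let Xp := prev.1
    let Yp := prev.2.1
    let Tp := prev.2.2
    let off : ℤ := 4 ^ (d + 1)
    ((fun p : ℤ × ℤ => (p.1, 3 * p.2)) '' Xp ∪
        (fun p : ℤ × ℤ => (p.1 + off, 3 * p.2 + 2)) '' (Yp \ {Tp}) ∪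
        (fun p : ℤ × ℤ => (p.1 + 2 * off, 3 * p.2 + 1)) '' Xp,
      (fun p : ℤ × ℤ => (p.1, 3 * p.2)) '' Yp ∪
        (fun p : ℤ × ℤ => (p.1 + 2 * off, 3 * p.2 + 1)) '' Yp,
      (Tp.1 + 2 * off, 3 * Tp.2 + 1))

/-- The point set `X_d`. -/
def Xset (d : ℕ) : Set (ℤ × ℤ) := (XYT d).1

/-- The distinguished subset `Y_d ⊆ X_d`. -/
def Yset (d : ℕ) : Set (ℤ × ℤ) := (XYT d).2.1

/-- The `d`-dimensional hypercube graph on `{0,1}^d`: two vertices are adjacent when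
they differ in exactly one coordinate. -/
def hypercube (d : ℕ) : SimpleGraph (Fin d → Bool) where
  Adj a b := hammingDist a b = 1
  symm := by
    constructor
    intro a b h
    rwa [hammingDist_comm]
  loopless := by
    constructor
    intro a h
    simp [hammingDist_self] at h

namespace RIG

def Tpt (d : ℕ) : ℤ × ℤ := (XYT d).2.2

lemma memX2 (d : ℕ) (r : ℤ × ℤ) : r ∈ Xset (d+2) ↔
    (∃ s ∈ Xset (d+1), r = (s.1, 3*s.2)) ∨
    (∃ s, s ∈ Yset (d+1) ∧ s ≠ Tpt (d+1) ∧ r = (s.1 + 4^(d+1), 3*s.2+2)) ∨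
    (∃ s ∈ Xset (d+1), r = (s.1 + 2*4^(d+1), 3*s.2+1)) := by
  show r ∈ (XYT (d+2)).1 ↔ _
  rw [XYT]
  simp only [Set.mem_union, Set.mem_image, Set.mem_diff, Set.mem_singleton_iff]
  constructor
  · rintro ((⟨s, hs, rfl⟩ | ⟨s, ⟨hs1, hs2⟩, rfl⟩) | ⟨s, hs, rfl⟩)
    · exact Or.inl ⟨s, hs, rfl⟩
    · exact Or.inr (Or.inl ⟨s, hs1, hs2, rfl⟩)
    · exact Or.inr (Or.inr ⟨s, hs, rfl⟩)
  · rintro (⟨s, hs, rfl⟩ | ⟨s, hs1, hs2, rfl⟩ | ⟨s, hs, rfl⟩)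
    · exact Or.inl (Or.inl ⟨s, hs, rfl⟩)
    · exact Or.inl (Or.inr ⟨s, ⟨hs1, hs2⟩, rfl⟩)
    · exact Or.inr ⟨s, hs, rfl⟩

lemma memY2 (d : ℕ) (r : ℤ × ℤ) : r ∈ Yset (d+2) ↔
    (∃ s ∈ Yset (d+1), r = (s.1, 3*s.2)) ∨
    (∃ s ∈ Yset (d+1), r = (s.1 + 2*4^(d+1), 3*s.2+1)) := by
  show r ∈ (XYT (d+2)).2.1 ↔ _
  rw [XYT]
  simp only [Set.mem_union, Set.mem_image]
  constructor
  · rintro (⟨s, hs, rfl⟩ | ⟨s, hs, rfl⟩)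
    · exact Or.inl ⟨s, hs, rfl⟩
    · exact Or.inr ⟨s, hs, rfl⟩
  · rintro (⟨s, hs, rfl⟩ | ⟨s, hs, rfl⟩)
    · exact Or.inl ⟨s, hs, rfl⟩
    · exact Or.inr ⟨s, hs, rfl⟩

lemma Tpt2 (d : ℕ) : Tpt (d+2) = ((Tpt (d+1)).1 + 2*4^(d+1), 3*(Tpt (d+1)).2 + 1) := by
  show (XYT (d+2)).2.2 = _
  rw [XYT]
  rfl

structure Inv (d : ℕ) : Prop where
  ysub : Yset d ⊆ Xset d
  tmem : Tpt d ∈ Yset d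
  xlb : ∀ p ∈ Xset d, 0 ≤ p.1
  xub : ∀ p ∈ Xset d, p.1 < 4 ^ d
  ylb : ∀ p ∈ Xset d, 0 ≤ p.2
  yub : ∀ p ∈ Xset d, p.2 ≤ (Tpt d).2
  ytop : ∀ p ∈ Xset d, p.2 = (Tpt d).2 → p = Tpt d
  injx : ∀ p ∈ Xset d, ∀ q ∈ Xset d, p.1 = q.1 → p = q
  injy : ∀ p ∈ Xset d, ∀ q ∈ Xset d, p.2 = q.2 → p = q

lemma memX1 (r : ℤ × ℤ) : r ∈ Xset 1 ↔ r = (0,0) ∨ r = (1,1) := by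
  show r ∈ (XYT 1).1 ↔ _
  rw [XYT]; simp

lemma memY1 (r : ℤ × ℤ) : r ∈ Yset 1 ↔ r = (0,0) ∨ r = (1,1) := by
  show r ∈ (XYT 1).2.1 ↔ _
  rw [XYT]; simp

lemma Tpt1 : Tpt 1 = (1,1) := by show (XYT 1).2.2 = _; rw [XYT]

lemma inv1 : Inv 1 := by
  constructor <;>
    simp only [memX1, memY1, Tpt1, Set.subset_def] <;>
    first
      | simp
      | (rintro p (rfl | rfl) <;> simp)
      | (rintro p (rfl | rfl) h <;> simp_all)
      | (rintro p (rfl | rfl) q (rfl | rfl) h <;> simp_all)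

lemma inv_step (d : ℕ) (ih : Inv (d+1)) : Inv (d+2) := by
  have h4 : (0:ℤ) < 4 ^ (d+1) := by positivity
  have tltX : ∀ p ∈ Xset (d+1), p ≠ Tpt (d+1) → p.2 < (Tpt (d+1)).2 := by
    intro p hp hne
    rcases lt_or_eq_of_le (ih.yub p hp) with h | h
    · exact h
    · exact absurd (ih.ytop p hp h) hne
  constructor
  · -- ysub
    intro r hr
    rw [memY2] at hr
    rw [memX2]
    rcases hr with ⟨s, hs, rfl⟩ | ⟨s, hs, rfl⟩
    · exact Or.inl ⟨s, ih.ysub hs, rfl⟩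
    · exact Or.inr (Or.inr ⟨s, ih.ysub hs, rfl⟩)
  · rw [memY2, Tpt2]
    exact Or.inr ⟨Tpt (d+1), ih.tmem, rfl⟩
  · intro p hp
    rw [memX2] at hp
    rcases hp with ⟨s, hs, rfl⟩ | ⟨s, hs, _, rfl⟩ | ⟨s, hs, rfl⟩
    · exact ih.xlb s hs
    · have := ih.xlb s (ih.ysub hs); simp; omega
    · have := ih.xlb s hs; simp; omega
  · intro p hp
    rw [memX2] at hp
    have h44 : (4:ℤ) ^ (d+2) = 4 * 4 ^ (d+1) := by ring
    rcases hp with ⟨s, hs, rfl⟩ | ⟨s, hs, _, rfl⟩ | ⟨s, hs, rfl⟩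
    · have := ih.xub s hs; simp; omega
    · have := ih.xub s (ih.ysub hs); simp; omega
    · have := ih.xub s hs; simp; omega
  · intro p hp
    rw [memX2] at hp
    rcases hp with ⟨s, hs, rfl⟩ | ⟨s, hs, _, rfl⟩ | ⟨s, hs, rfl⟩
    · have := ih.ylb s hs; simp; omega
    · have := ih.ylb s (ih.ysub hs); simp; omega
    · have := ih.ylb s hs; simp; omega
  · intro p hp
    rw [memX2] at hp
    rw [Tpt2]
    rcases hp with ⟨s, hs, rfl⟩ | ⟨s, hs, hne, rfl⟩ | ⟨s, hs, rfl⟩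
    · have := ih.yub s hs; simp; omega
    · have := tltX s (ih.ysub hs) hne; simp; omega
    · have := ih.yub s hs; simp; omega
  · intro p hp hpt
    rw [memX2] at hp
    rw [Tpt2] at hpt ⊢
    rcases hp with ⟨s, hs, rfl⟩ | ⟨s, hs, hne, rfl⟩ | ⟨s, hs, rfl⟩
    · simp at hpt; omega
    · simp at hpt; omega
    · simp at hpt ⊢
      have : s = Tpt (d+1) := ih.ytop s hs (by omega)
      rw [this]
      exact ⟨rfl, rfl⟩
  · intro p hp q hq hpq
    rw [memX2] at hp hq
    rcases hp with ⟨s, hs, rfl⟩ | ⟨s, hs, hne, rfl⟩ | ⟨s, hs, rfl⟩ <;>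
      rcases hq with ⟨t, ht, rfl⟩ | ⟨t, ht, hnet, rfl⟩ | ⟨t, ht, rfl⟩ <;>
      simp at hpq ⊢
    · have := ih.injx s hs t ht hpq
      rw [this]; simp
    · have := ih.xub s hs; have := ih.xlb t (ih.ysub ht); omega
    · have := ih.xub s hs; have := ih.xlb t ht; omega
    · have := ih.xub t ht; have := ih.xlb s (ih.ysub hs); omega
    · have := ih.injx s (ih.ysub hs) t (ih.ysub ht) (by omega)
      rw [this]; simp
    · have := ih.xub s (ih.ysub hs); have := ih.xlb t ht; omega
    · have := ih.xub t ht; have := ih.xlb s hs; omega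
    · have := ih.xub t (ih.ysub ht); have := ih.xlb s hs; omega
    · have := ih.injx s hs t ht (by omega)
      rw [this]; simp
  · intro p hp q hq hpq
    rw [memX2] at hp hq
    rcases hp with ⟨s, hs, rfl⟩ | ⟨s, hs, hne, rfl⟩ | ⟨s, hs, rfl⟩ <;>
      rcases hq with ⟨t, ht, rfl⟩ | ⟨t, ht, hnet, rfl⟩ | ⟨t, ht, rfl⟩ <;>
      simp at hpq ⊢
    · have := ih.injy s hs t ht (by omega); rw [this]; simp
    · omega
    · omega
    · omega
    · have := ih.injy s (ih.ysub hs) t (ih.ysub ht) (by omega); rw [this]; simp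
    · omega
    · omega
    · omega
    · have := ih.injy s hs t ht (by omega); rw [this]; simp

lemma inv (d : ℕ) (hd : 1 ≤ d) : Inv d := by
  induction d with
  | zero => omega
  | succ n ih =>
    match n, ih with
    | 0, _ => exact inv1
    | (m+1), ih => exact inv_step m (ih (by omega))

lemma rig_adj (P : Set (ℤ × ℤ)) (p q : ℤ × ℤ) : (rig P).Adj p q ↔
    (p ≠ q ∧ p ∈ P ∧ q ∈ P ∧ ∀ r ∈ P, r ≠ p → r ≠ q →
    ¬ (min p.1 q.1 ≤ r.1 ∧ r.1 ≤ max p.1 q.1 ∧ min p.2 q.2 ≤ r.2 ∧ r.2 ≤ max p.2 q.2)) :=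
  Iff.rfl

lemma adjLL (d : ℕ) (ih : Inv (d+1)) (p q : ℤ × ℤ) (hp : p ∈ Xset (d+1)) (hq : q ∈ Xset (d+1)) :
    (rig (Xset (d+2))).Adj (p.1, 3*p.2) (q.1, 3*q.2) ↔ (rig (Xset (d+1))).Adj p q := by
  have h4 : (0:ℤ) < 4 ^ (d+1) := by positivity
  rw [rig_adj, rig_adj]
  constructor
  · rintro ⟨hne, -, -, hblk⟩
    refine ⟨?_, hp, hq, ?_⟩
    · rintro rfl; exact hne rfl
    · intro r hr hrp hrq hrect
      refine hblk (r.1, 3*r.2) ((memX2 d _).2 (Or.inl ⟨r, hr, rfl⟩)) ?_ ?_ ?_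
      · intro h
        exact hrp (by ext <;> simp at h ⊢ <;> omega)
      · intro h
        exact hrq (by ext <;> simp at h ⊢ <;> omega)
      · simp only at hrect ⊢
        omega
  · rintro ⟨hne, -, -, hblk⟩
    refine ⟨?_, (memX2 d _).2 (Or.inl ⟨p, hp, rfl⟩), (memX2 d _).2 (Or.inl ⟨q, hq, rfl⟩), ?_⟩
    · intro h
      exact hne (by ext <;> simp at h ⊢ <;> omega)
    · intro r hr hrp hrq hrect
      have hpx := ih.xub p hp
      have hqx := ih.xub q hq
      rcases (memX2 d r).1 hr with ⟨s, hs, rfl⟩ | ⟨s, hs, hst, rfl⟩ | ⟨s, hs, rfl⟩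
      · refine hblk s hs ?_ ?_ ?_
        · intro h; exact hrp (by rw [h])
        · intro h; exact hrq (by rw [h])
        · simp only at hrect ⊢; omega
      · have := ih.xlb s (ih.ysub hs)
        simp only at hrect; omega
      · have := ih.xlb s hs
        simp only at hrect; omega

lemma adjRR (d : ℕ) (ih : Inv (d+1)) (p q : ℤ × ℤ) (hp : p ∈ Xset (d+1)) (hq : q ∈ Xset (d+1)) :
    (rig (Xset (d+2))).Adj (p.1 + 2*4^(d+1), 3*p.2+1) (q.1 + 2*4^(d+1), 3*q.2+1) ↔
      (rig (Xset (d+1))).Adj p q := by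
  have h4 : (0:ℤ) < 4 ^ (d+1) := by positivity
  rw [rig_adj, rig_adj]
  constructor
  · rintro ⟨hne, -, -, hblk⟩
    refine ⟨?_, hp, hq, ?_⟩
    · rintro rfl; exact hne rfl
    · intro r hr hrp hrq hrect
      refine hblk (r.1 + 2*4^(d+1), 3*r.2+1) ((memX2 d _).2 (Or.inr (Or.inr ⟨r, hr, rfl⟩))) ?_ ?_ ?_
      · intro h
        exact hrp (by ext <;> simp at h ⊢ <;> omega)
      · intro h
        exact hrq (by ext <;> simp at h ⊢ <;> omega)
      · simp only at hrect ⊢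
        omega
  · rintro ⟨hne, -, -, hblk⟩
    refine ⟨?_, (memX2 d _).2 (Or.inr (Or.inr ⟨p, hp, rfl⟩)),
      (memX2 d _).2 (Or.inr (Or.inr ⟨q, hq, rfl⟩)), ?_⟩
    · intro h
      exact hne (by ext <;> simp at h ⊢ <;> omega)
    · intro r hr hrp hrq hrect
      have hpx := ih.xlb p hp
      have hqx := ih.xlb q hq
      rcases (memX2 d r).1 hr with ⟨s, hs, rfl⟩ | ⟨s, hs, hst, rfl⟩ | ⟨s, hs, rfl⟩
      · have := ih.xub s hs
        simp only at hrect; omega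
      · have := ih.xub s (ih.ysub hs)
        simp only at hrect; omega
      · refine hblk s hs ?_ ?_ ?_
        · intro h; exact hrp (by ext <;> simp [h])
        · intro h; exact hrq (by ext <;> simp [h])
        · simp only at hrect ⊢; omega

lemma adjLR (d : ℕ) (ih : Inv (d+1)) (p q : ℤ × ℤ) (hp : p ∈ Yset (d+1)) (hq : q ∈ Yset (d+1)) :
    (rig (Xset (d+2))).Adj (p.1, 3*p.2) (q.1 + 2*4^(d+1), 3*q.2+1) ↔ p = q := by
  have h4 : (0:ℤ) < 4 ^ (d+1) := by positivity
  have hpX := ih.ysub hp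
  have hqX := ih.ysub hq
  have hpx := ih.xub p hpX
  have hqx := ih.xlb q hqX
  have hqx2 := ih.xub q hqX
  have hpx2 := ih.xlb p hpX
  rw [rig_adj]
  constructor
  · rintro ⟨hne, -, -, hblk⟩
    by_contra hpq
    have hy : p.2 ≠ q.2 := fun h => hpq (ih.injy p hpX q hqX h)
    rcases lt_or_gt_of_ne hy with hlt | hgt
    · -- blocker M p
      have hpT : p ≠ Tpt (d+1) := by
        intro h
        have := ih.yub q hqX
        rw [h] at hlt; omega
      refine hblk (p.1 + 4^(d+1), 3*p.2+2)
        ((memX2 d _).2 (Or.inr (Or.inl ⟨p, hp, hpT, rfl⟩))) ?_ ?_ ?_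
      · intro h; simp at h <;> omega
      · intro h; simp at h <;> omega
      · simp only; omega
    · -- blocker M q
      have hqT : q ≠ Tpt (d+1) := by
        intro h
        have := ih.yub p hpX
        rw [h] at hgt; omega
      refine hblk (q.1 + 4^(d+1), 3*q.2+2)
        ((memX2 d _).2 (Or.inr (Or.inl ⟨q, hq, hqT, rfl⟩))) ?_ ?_ ?_
      · intro h; simp at h <;> omega
      · intro h; simp at h <;> omega
      · simp only; omega
  · rintro rfl
    refine ⟨?_, (memX2 d _).2 (Or.inl ⟨p, hpX, rfl⟩),
      (memX2 d _).2 (Or.inr (Or.inr ⟨p, hpX, rfl⟩)), ?_⟩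
    · intro h; simp at h <;> omega
    · intro r hr hrp hrq hrect
      rcases (memX2 d r).1 hr with ⟨s, hs, rfl⟩ | ⟨s, hs, hst, rfl⟩ | ⟨s, hs, rfl⟩
      · have hsp : s.2 = p.2 := by simp only at hrect; omega
        have := ih.injy s hs p hpX hsp
        exact hrp (by rw [this])
      · simp only at hrect; omega
      · have hsp : s.2 = p.2 := by simp only at hrect; omega
        have := ih.injy s hs p hpX hsp
        exact hrq (by rw [this])

lemma hd_cons (n : ℕ) (a0 b0 : Bool) (x y : Fin n → Bool) :
    hammingDist (Fin.cons a0 x : Fin (n+1) → Bool) (Fin.cons b0 y) =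
      (if a0 = b0 then 0 else 1) + hammingDist x y := by
  classical
  simp only [hammingDist]
  rw [Finset.card_filter, Finset.card_filter, Fin.sum_univ_succ]
  simp only [Fin.cons_zero, Fin.cons_succ]
  by_cases h : a0 = b0 <;> simp [h]

lemma hd_one (a b : Fin 1 → Bool) : hammingDist a b = if a 0 = b 0 then 0 else 1 := by
  classical
  simp only [hammingDist]
  rw [Finset.card_filter, Fin.sum_univ_one]
  by_cases h : a 0 = b 0 <;> simp [h]

lemma induce_adj' {V : Type*} (G : SimpleGraph V) (s : Set V) (a b : s) :
    (G.induce s).Adj a b ↔ G.Adj a.val b.val := Iff.rfl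

lemma base : Nonempty (hypercube 1 ≃g (rig (Xset 1)).induce (Yset 1)) := by
  have h0 : ((0:ℤ),(0:ℤ)) ∈ Yset 1 := (memY1 _).2 (Or.inl rfl)
  have h1 : ((1:ℤ),(1:ℤ)) ∈ Yset 1 := (memY1 _).2 (Or.inr rfl)
  have adj01 : (rig (Xset 1)).Adj (0,0) (1,1) := by
    rw [rig_adj]
    refine ⟨by simp, (memX1 _).2 (Or.inl rfl), (memX1 _).2 (Or.inr rfl), ?_⟩
    intro r hr hrp hrq _
    rcases (memX1 r).1 hr with rfl | rfl
    · exact hrp rfl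
    · exact hrq rfl
  let f : (Fin 1 → Bool) → ↥(Yset 1) := fun a => if a 0 then ⟨(1,1), h1⟩ else ⟨(0,0), h0⟩
  have fT : ∀ a, a 0 = true → f a = ⟨(1,1), h1⟩ := by
    intro a h; simp only [f, h]; rfl
  have fF : ∀ a, a 0 = false → f a = ⟨(0,0), h0⟩ := by
    intro a h; simp only [f, h]; rfl
  refine ⟨⟨⟨f, fun r _ => decide (r.val = ((1:ℤ),(1:ℤ))), ?_, ?_⟩, ?_⟩⟩
  · intro a
    funext i
    have : i = 0 := Subsingleton.elim _ _
    subst this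
    cases h : a 0
    · rw [fF a h]; simp [h]
    · rw [fT a h]; simp [h]
  · intro r
    show f (fun _ => decide (r.val = ((1:ℤ),(1:ℤ)))) = r
    rcases (memY1 r.val).1 r.2 with h | h
    · have : decide (r.val = ((1:ℤ),(1:ℤ))) = false := by simp [h]
      rw [fF (fun _ => decide (r.val = ((1:ℤ),(1:ℤ)))) this]
      exact Subtype.ext h.symm
    · have : decide (r.val = ((1:ℤ),(1:ℤ))) = true := by simp [h]
      rw [fT (fun _ => decide (r.val = ((1:ℤ),(1:ℤ)))) this]
      exact Subtype.ext h.symm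
  · intro a b
    show (rig (Xset 1)).Adj (f a).val (f b).val ↔ hammingDist a b = 1
    rw [hd_one]
    cases ha : a 0 <;> cases hb : b 0
    · rw [fF a ha, fF b hb, if_pos rfl]
      simp only []
      constructor
      · intro h; exact absurd h ((rig (Xset 1)).loopless.irrefl _)
      · intro h; omega
    · rw [fF a ha, fT b hb, if_neg (by simp)]
      exact ⟨fun _ => rfl, fun _ => adj01⟩
    · rw [fT a ha, fF b hb, if_neg (by simp)]
      exact ⟨fun _ => rfl, fun _ => adj01.symm⟩
    · rw [fT a ha, fT b hb, if_pos rfl]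
      constructor
      · intro h; exact absurd h ((rig (Xset 1)).loopless.irrefl _)
      · intro h; omega

lemma step (d : ℕ) (IH : Nonempty (hypercube (d+1) ≃g (rig (Xset (d+1))).induce (Yset (d+1)))) :
    Nonempty (hypercube (d+2) ≃g (rig (Xset (d+2))).induce (Yset (d+2))) := by
  obtain ⟨e⟩ := IH
  have iv : Inv (d+1) := inv (d+1) (by omega)
  have h4 : (0:ℤ) < 4 ^ (d+1) := by positivity
  have memL : ∀ z : ↥(Yset (d+1)), ((z.val.1, 3*z.val.2) : ℤ × ℤ) ∈ Yset (d+2) :=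
    fun z => (memY2 d _).2 (Or.inl ⟨z.val, z.2, rfl⟩)
  have memR : ∀ z : ↥(Yset (d+1)), ((z.val.1 + 2*4^(d+1), 3*z.val.2+1) : ℤ × ℤ) ∈ Yset (d+2) :=
    fun z => (memY2 d _).2 (Or.inr ⟨z.val, z.2, rfl⟩)
  let g : Bool → (Fin (d+1) → Bool) → ↥(Yset (d+2)) := fun b0 x =>
    if b0 then ⟨_, memR (e x)⟩ else ⟨_, memL (e x)⟩
  have gT : ∀ x, (g true x).val = ((e x).val.1 + 2*4^(d+1), 3*(e x).val.2+1) := fun x => rfl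
  have gF : ∀ x, (g false x).val = ((e x).val.1, 3*(e x).val.2) := fun x => rfl
  let f : (Fin (d+2) → Bool) → ↥(Yset (d+2)) := fun a => g (a 0) (Fin.tail a)
  have hf : ∀ a, f a = g (a 0) (Fin.tail a) := fun a => rfl
  have exlb : ∀ z : ↥(Yset (d+1)), 0 ≤ z.val.1 := fun z => iv.xlb _ (iv.ysub z.2)
  have exub : ∀ z : ↥(Yset (d+1)), z.val.1 < 4^(d+1) := fun z => iv.xub _ (iv.ysub z.2)
  have einj : ∀ x y : Fin (d+1) → Bool, (e x).val = (e y).val → x = y := by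
    intro x y h
    exact e.toEquiv.injective (Subtype.ext h)
  have hinj : Function.Injective f := by
    intro a b hab
    rw [hf a, hf b] at hab
    have hv := congrArg Subtype.val hab
    have key : Fin.tail a = Fin.tail b ∧ a 0 = b 0 := by
      cases ha : a 0 <;> cases hb : b 0 <;> rw [ha, hb] at hv
      · rw [gF, gF] at hv
        have h1 := congrArg Prod.fst hv
        have h2 := congrArg Prod.snd hv
        simp only at h1 h2
        exact ⟨einj _ _ (Prod.ext h1 (by omega)), rfl⟩
      · rw [gF, gT] at hv
        have h1 := congrArg Prod.fst hv
        simp only at h1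
        have := exub (e (Fin.tail a)); have := exlb (e (Fin.tail b))
        omega
      · rw [gT, gF] at hv
        have h1 := congrArg Prod.fst hv
        simp only at h1
        have := exlb (e (Fin.tail a)); have := exub (e (Fin.tail b))
        omega
      · rw [gT, gT] at hv
        have h1 := congrArg Prod.fst hv
        have h2 := congrArg Prod.snd hv
        simp only at h1 h2
        exact ⟨einj _ _ (Prod.ext (by omega) (by omega)), rfl⟩
    rw [← Fin.cons_self_tail a, ← Fin.cons_self_tail b, key.1, key.2]
  have hsurj : Function.Surjective f := by
    rintro ⟨r, hr⟩
    rcases (memY2 d r).1 hr with ⟨s, hs, rfl⟩ | ⟨s, hs, rfl⟩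
    · refine ⟨Fin.cons false (e.symm ⟨s, hs⟩), ?_⟩
      apply Subtype.ext
      rw [hf]
      simp only [Fin.cons_zero, Fin.tail_cons]
      rw [gF]
      simp
    · refine ⟨Fin.cons true (e.symm ⟨s, hs⟩), ?_⟩
      apply Subtype.ext
      rw [hf]
      simp only [Fin.cons_zero, Fin.tail_cons]
      rw [gT]
      simp
  have eadj : ∀ x y : Fin (d+1) → Bool,
      (rig (Xset (d+1))).Adj (e x).val (e y).val ↔ hammingDist x y = 1 := by
    intro x y
    rw [← induce_adj']
    exact e.map_rel_iff
  have eeq : ∀ x y : Fin (d+1) → Bool, ((e x).val = (e y).val ↔ x = y) := by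
    intro x y
    exact ⟨einj x y, fun h => by rw [h]⟩
  refine ⟨⟨Equiv.ofBijective f ⟨hinj, hsurj⟩, ?_⟩⟩
  intro a b
  show (rig (Xset (d+2))).Adj (f a).val (f b).val ↔ (hypercube (d+2)).Adj a b
  have hrhs : (hypercube (d+2)).Adj a b ↔
      (if a 0 = b 0 then 0 else 1) + hammingDist (Fin.tail a) (Fin.tail b) = 1 := by
    show hammingDist a b = 1 ↔ _
    conv_lhs => rw [← Fin.cons_self_tail a, ← Fin.cons_self_tail b]
    rw [hd_cons]
  rw [hrhs, hf a, hf b]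
  cases ha : a 0 <;> cases hb : b 0
  · rw [if_pos rfl, gF, gF,
      adjLL d iv _ _ (iv.ysub (e (Fin.tail a)).2) (iv.ysub (e (Fin.tail b)).2), eadj]
    omega
  · rw [if_neg (by simp), gF, gT,
      adjLR d iv _ _ (e (Fin.tail a)).2 (e (Fin.tail b)).2, eeq]
    constructor
    · intro h; rw [h]; simp [hammingDist_self]
    · intro h
      exact hammingDist_eq_zero.1 (by omega)
  · rw [if_neg (by simp), gT, gF, SimpleGraph.adj_comm,
      adjLR d iv _ _ (e (Fin.tail b)).2 (e (Fin.tail a)).2, eeq]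
    constructor
    · intro h; rw [h]; simp [hammingDist_self]
    · intro h
      exact (hammingDist_eq_zero.1 (by omega)).symm
  · rw [if_pos rfl, gT, gT,
      adjRR d iv _ _ (iv.ysub (e (Fin.tail a)).2) (iv.ysub (e (Fin.tail b)).2), eadj]
    omega

lemma main (d : ℕ) : Nonempty (hypercube (d+1) ≃g (rig (Xset (d+1))).induce (Yset (d+1))) := by
  induction d with
  | zero => exact base
  | succ n ih => exact step n ih

end RIG

/-- In the rectangle of influence graph of `X_d`, the subset `Y_d` induces the
`d`-dimensional hypercube graph. -/
theorem rectangle_of_influence_hypercube (d : ℕ) (hd : 1 ≤ d) :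
    Nonempty (hypercube d ≃g (rig (Xset d)).induce (Yset d)) := by
  obtain ⟨n, rfl⟩ : ∃ n, d = n + 1 := ⟨d - 1, by omega⟩
  exact RIG.main n
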